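/- Combining both particle-hole transformations: E_Λ^U(|Λ| - N_e, ω̄) = E_Λ^U(N_e, ω) + U(N_e + N_c(ω) - |Λ|), where ω̄_x = 1 - ω_x. -/

import Mathlib

open Finset

/-- Nearest-neighbor hopping matrix element on `ℤ^d`: `1` if `|x-y| = 1`, else `0`. -/
noncomputable def hop (d : ℕ) (x y : Fin d → ℤ) : ℝ :=
  if (∑ i, (x i - y i) ^ 2) = 1 then 1 else 0

/-- Falicov-Kimball one-body Hamiltonian on `ℓ²(Λ)`:
`h^U_{xy}(ω) = -t_{xy} - U ω_x δ_{xy}`. -/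
noncomputable def fkh (d : ℕ) (U : ℝ) (Λ : Finset (Fin d → ℤ))
    (ω : (Fin d → ℤ) → ℕ) : Matrix Λ Λ ℝ :=
  Matrix.of fun x y =>
    -hop d (x : Fin d → ℤ) (y : Fin d → ℤ)
      - U * (ω (x : Fin d → ℤ) : ℝ) * (if x = y then 1 else 0)

open Polynomial Matrix in
private lemma my_charpoly_conj {n R : Type*} [Fintype n] [DecidableEq n] [CommRing R]
    (W V M : Matrix n n R) (hWV : W * V = 1) :
    (W * M * V).charpoly = M.charpoly := by
  let Cm : Matrix n n R →+* Matrix n n R[X] := (Polynomial.C : R →+* R[X]).mapMatrix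
  have hcomm : Commute (Matrix.scalar n (X : R[X])) (Cm W) :=
    Matrix.scalar_commute _ (fun r => Commute.all _ _) _
  have h1 : charmatrix (W * M * V) = Cm W * charmatrix M * Cm V := by
    rw [charmatrix, charmatrix]
    rw [Matrix.mul_sub, Matrix.sub_mul]
    congr 1
    · symm
      rw [← hcomm.eq, Matrix.mul_assoc, ← _root_.map_mul, hWV, RingHom.map_one,
        Matrix.mul_one]
    · show Cm (W * M * V) = _
      rw [_root_.map_mul, _root_.map_mul]
  have h2 : (Cm W).det * (Cm V).det = 1 := by
    rw [← Matrix.det_mul, ← _root_.map_mul, hWV, RingHom.map_one, Matrix.det_one]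
  rw [Matrix.charpoly, Matrix.charpoly, h1, Matrix.det_mul, Matrix.det_mul]
  rw [mul_comm ((Cm W).det), mul_assoc, h2, mul_one]

open Polynomial in
private lemma my_charpoly_diagonal {n : Type*} [Fintype n] [DecidableEq n] (f : n → ℝ) :
    (Matrix.diagonal f).charpoly
      = ((Finset.univ.val.map f).map (fun r => X - C r)).prod := by
  have h1 : Matrix.charmatrix (Matrix.diagonal f)
      = Matrix.diagonal (fun i => (X : ℝ[X]) - C (f i)) := by
    ext i j
    by_cases h : i = j
    · subst h; simp
    · simp [h, Matrix.diagonal_apply_ne _ h]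
  rw [Matrix.charpoly, h1, Matrix.det_diagonal, Multiset.map_map]
  rfl

private lemma herm_stuff {n : Type*} [Fintype n] [DecidableEq n] {A : Matrix n n ℝ}
    (hA : A.IsHermitian) :
    (∃ W : Matrix n n ℝ, W * star W = 1 ∧ star W * W = 1 ∧
      A = W * Matrix.diagonal hA.eigenvalues * star W) := by
  refine ⟨hA.eigenvectorUnitary, ?_, ?_, ?_⟩
  · exact (Unitary.mem_iff.mp hA.eigenvectorUnitary.2).2
  · exact (Unitary.mem_iff.mp hA.eigenvectorUnitary.2).1
  · have := hA.spectral_theorem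
    rw [Unitary.conjStarAlgAut_apply] at this
    have hd : (RCLike.ofReal ∘ hA.eigenvalues : n → ℝ) = hA.eigenvalues := rfl
    rw [hd] at this
    exact this

open Polynomial in
private lemma herm_charpoly {n : Type*} [Fintype n] [DecidableEq n] {A : Matrix n n ℝ}
    (hA : A.IsHermitian) :
    A.charpoly = ((Finset.univ.val.map hA.eigenvalues).map (fun r => X - C r)).prod := by
  obtain ⟨W, h1, _h2, h3⟩ := herm_stuff hA
  have hc := my_charpoly_conj W (star W) (Matrix.diagonal hA.eigenvalues) h1
  rw [← h3] at hc
  rw [hc, my_charpoly_diagonal]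

private lemma herm_trace {n : Type*} [Fintype n] [DecidableEq n] {A : Matrix n n ℝ}
    (hA : A.IsHermitian) : A.trace = ∑ i, hA.eigenvalues i := by
  obtain ⟨W, _h1, h2, h3⟩ := herm_stuff hA
  have h4 : A.trace = (W * Matrix.diagonal hA.eigenvalues * star W).trace := by rw [← h3]
  rw [Matrix.trace_mul_cycle, h2, Matrix.one_mul, Matrix.trace_diagonal] at h4
  exact h4

/-- The sublattice sign. -/
noncomputable def epsSign (d : ℕ) (v : Fin d → ℤ) : ℝ :=
  if Even (∑ i, v i) then 1 else -1

private lemma epsSign_sq (d : ℕ) (v : Fin d → ℤ) : epsSign d v * epsSign d v = 1 := by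
  unfold epsSign; split <;> norm_num

private lemma parity_aux {d : ℕ} {x y : Fin d → ℤ} (h : (∑ i, (x i - y i) ^ 2) = 1) :
    ¬ (Even (∑ i, x i) ↔ Even (∑ i, y i)) := by
  have h2 : ((∑ i, (x i - y i) ^ 2 : ℤ) : ZMod 2) = 1 := by rw [h]; norm_num
  push_cast at h2
  have sq : ∀ a : ZMod 2, a ^ 2 = a := by decide
  simp only [sq] at h2
  rw [Finset.sum_sub_distrib] at h2
  have h3 : ((∑ i, x i : ℤ) : ZMod 2) - ((∑ i, y i : ℤ) : ZMod 2) = 1 := by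
    push_cast; exact h2
  have hcast : ∀ a : ℤ, Even a ↔ ((a : ZMod 2) = 0) := by
    intro a
    rw [even_iff_two_dvd, ZMod.intCast_zmod_eq_zero_iff_dvd a 2]
    norm_num
  have hone : ∀ a : ℤ, ¬ Even a → ((a : ZMod 2) = 1) := by
    intro a ha
    have := (hcast a).not.mp ha
    revert this
    generalize ((a : ZMod 2)) = b
    revert b; decide
  intro hiff
  by_cases hx : Even (∑ i, x i)
  · have hy := hiff.mp hx
    rw [(hcast _).mp hx, (hcast _).mp hy] at h3
    simp at h3
  · have hy := fun h => hx (hiff.mpr h)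
    rw [hone _ hx, hone _ hy] at h3
    simp at h3

private lemma epsSign_mul {d : ℕ} {x y : Fin d → ℤ} (h : (∑ i, (x i - y i) ^ 2) = 1) :
    epsSign d x * epsSign d y = -1 := by
  have := parity_aux h
  unfold epsSign
  split <;> split <;> first | (exfalso; tauto) | norm_num

private lemma conj_fkh (d : ℕ) (U : ℝ) (Λ : Finset (Fin d → ℤ)) (ω : (Fin d → ℤ) → ℕ)
    (hω : ∀ x, ω x ≤ 1) :
    Matrix.diagonal (fun v : ↥Λ => epsSign d (v : Fin d → ℤ))
        * fkh d U Λ (fun x => 1 - ω x)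
        * Matrix.diagonal (fun v : ↥Λ => epsSign d (v : Fin d → ℤ))
      = -(fkh d U Λ ω) - U • 1 := by
  ext x y
  rw [Matrix.mul_diagonal, Matrix.diagonal_mul]
  have h2 : (-(fkh d U Λ ω) - U • (1 : Matrix ↥Λ ↥Λ ℝ)) x y
      = -(fkh d U Λ ω x y) - U * (if x = y then 1 else 0) := by
    simp [Matrix.sub_apply, Matrix.one_apply, Matrix.smul_apply]
  rw [h2]
  show epsSign d ↑x * fkh d U Λ (fun x => 1 - ω x) x y * epsSign d ↑y = _
  unfold fkh hop
  simp only [Matrix.of_apply]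
  by_cases hxy : x = y
  · subst hxy
    have hz : (∑ i, ((x:Fin d → ℤ) i - (x:Fin d → ℤ) i) ^ 2) = (0:ℤ) := by simp
    have hcast : ((1 - ω (x:Fin d → ℤ) : ℕ) : ℝ) = 1 - (ω (x:Fin d → ℤ) : ℝ) := by
      rw [Nat.cast_sub (hω _)]; norm_num
    simp only [hz, eq_self_iff_true, if_true, hcast, if_neg (show (0:ℤ) ≠ 1 by norm_num)]
    have hε := epsSign_sq d (x : Fin d → ℤ)
    linear_combination (-(U * (1 - (ω (x : Fin d → ℤ) : ℝ)))) * hε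
  · simp only [if_neg hxy, mul_zero, sub_zero, mul_one]
    by_cases hh : (∑ i, ((x:Fin d → ℤ) i - (y:Fin d → ℤ) i) ^ 2) = 1
    · simp only [if_pos hh]
      have hm := epsSign_mul hh
      linear_combination -hm
    · simp only [if_neg hh]
      ring

private lemma multiset_map_equiv {α β γ : Type*} [Fintype α] [Fintype β]
    (f : β → γ) (e : α ≃ β) :
    Multiset.map f Finset.univ.val = Multiset.map (f ∘ e) Finset.univ.val := by
  conv_lhs => rw [← Finset.map_univ_equiv e]
  rw [Finset.map_val, Multiset.map_map]
  rfl

theorem stmt7 (d : ℕ) (U : ℝ) (Λ : Finset (Fin d → ℤ))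
    (ω : (Fin d → ℤ) → ℕ) (hω : ∀ x, ω x ≤ 1)
    (Ne : ℕ) (hNe : Ne ≤ Λ.card)
    (hH1 : (fkh d U Λ (fun x => 1 - ω x)).IsHermitian)
    (hH2 : (fkh d U Λ ω).IsHermitian)
    (μ1 μ2 : Fin Λ.card → ℝ) (hm1 : Monotone μ1) (hm2 : Monotone μ2)
    (he1 : ∃ e : Fin Λ.card ≃ ↥Λ, ∀ j, μ1 j = hH1.eigenvalues (e j))
    (he2 : ∃ e : Fin Λ.card ≃ ↥Λ, ∀ j, μ2 j = hH2.eigenvalues (e j)) :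
    ∑ j : Fin (Λ.card - Ne), μ1 (Fin.castLE (Nat.sub_le _ _) j)
      = ∑ j : Fin Ne, μ2 (Fin.castLE hNe j)
        + U * ((Ne : ℝ) + (∑ x ∈ Λ, ω x : ℕ) - Λ.card) := by
  classical
  obtain ⟨e1, he1⟩ := he1
  obtain ⟨e2, he2⟩ := he2
  set D : Matrix ↥Λ ↥Λ ℝ := Matrix.diagonal (fun v : ↥Λ => epsSign d (v : Fin d → ℤ)) with hD
  have hDD : D * D = 1 := by
    rw [hD, Matrix.diagonal_mul_diagonal]
    rw [show (fun v : ↥Λ => epsSign d (v : Fin d → ℤ) * epsSign d (v : Fin d → ℤ))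
        = fun _ => (1:ℝ) from funext fun v => epsSign_sq d _]
    exact Matrix.diagonal_one
  -- spectral decomposition of A = fkh ω
  obtain ⟨W, hW1, hW2, hWA⟩ := herm_stuff hH2
  -- B = D * (-A - U • 1) * D
  have hDBD := conj_fkh d U Λ ω hω
  have hBform : fkh d U Λ (fun x => 1 - ω x)
      = D * (-(fkh d U Λ ω) - U • 1) * D := by
    rw [← hDBD]
    rw [show D * (D * fkh d U Λ (fun x => 1 - ω x) * D) * D
        = (D * D) * fkh d U Λ (fun x => 1 - ω x) * (D * D) by noncomm_ring]
    rw [hDD, Matrix.one_mul, Matrix.mul_one]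
  -- -A - U•1 = W * diagonal g * star W
  set g : ↥Λ → ℝ := fun i => -hH2.eigenvalues i - U with hg
  have hshift : -(fkh d U Λ ω) - U • 1 = W * Matrix.diagonal g * star W := by
    have hdg : Matrix.diagonal g
        = -(Matrix.diagonal hH2.eigenvalues) - U • (1 : Matrix ↥Λ ↥Λ ℝ) := by
      ext i j
      by_cases h : i = j
      · subst h; simp [hg, Matrix.one_apply]
      · simp [h, Matrix.one_apply, Matrix.diagonal_apply_ne _ h]
    conv_rhs => rw [hdg]
    rw [Matrix.mul_sub, Matrix.sub_mul, Matrix.mul_neg, Matrix.neg_mul, ← hWA,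
      Matrix.mul_smul, Matrix.mul_one, Matrix.smul_mul, hW1]
  -- charpoly chain
  have hchain : (fkh d U Λ (fun x => 1 - ω x)).charpoly
      = (Matrix.diagonal g).charpoly := by
    rw [hBform, my_charpoly_conj _ _ _ hDD, hshift, my_charpoly_conj _ _ _ hW1]
  have hms : Multiset.map hH1.eigenvalues Finset.univ.val
      = Multiset.map g Finset.univ.val := by
    have h5 := hchain
    rw [herm_charpoly hH1, my_charpoly_diagonal] at h5
    have h6 := congrArg Polynomial.roots h5
    rwa [Polynomial.roots_multiset_prod_X_sub_C,
      Polynomial.roots_multiset_prod_X_sub_C] at h6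
  -- transfer to Fin Λ.card
  have hmult : Multiset.map μ1 (Finset.univ.val : Multiset (Fin Λ.card))
      = Multiset.map (fun j => -μ2 (Fin.rev j) - U) Finset.univ.val := by
    have ha : Multiset.map μ1 (Finset.univ.val : Multiset (Fin Λ.card))
        = Multiset.map hH1.eigenvalues Finset.univ.val := by
      rw [multiset_map_equiv hH1.eigenvalues e1]
      congr 1
      funext j
      exact he1 j
    have hb : Multiset.map g Finset.univ.val
        = Multiset.map (fun j => -μ2 j - U) (Finset.univ.val : Multiset (Fin Λ.card)) := by
      rw [multiset_map_equiv g e2]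
      congr 1
      funext j
      simp [hg, he2 j]
    have hc : Multiset.map (fun j => -μ2 j - U) (Finset.univ.val : Multiset (Fin Λ.card))
        = Multiset.map (fun j => -μ2 (Fin.rev j) - U) Finset.univ.val := by
      have hrev := multiset_map_equiv (fun j : Fin Λ.card => -μ2 j - U) Fin.revPerm
      simpa [Function.comp] using hrev
    rw [ha, hms, hb, hc]
  -- pointwise identity from sortedness
  have hmono2 : Monotone (fun j : Fin Λ.card => -μ2 (Fin.rev j) - U) := by
    intro a b hab
    have h1 : Fin.rev b ≤ Fin.rev a := Fin.rev_le_rev.mpr hab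
    have h2 := hm2 h1
    simp only
    linarith
  have hL : List.ofFn μ1 = List.ofFn (fun j => -μ2 (Fin.rev j) - U) := by
    have hperm : List.Perm (List.ofFn μ1) (List.ofFn (fun j => -μ2 (Fin.rev j) - U)) := by
      rw [← Multiset.coe_eq_coe]
      have huniv : (Finset.univ.val : Multiset (Fin Λ.card)) = ↑(List.finRange Λ.card) := by
        rw [Fin.univ_def]
      rw [List.ofFn_eq_map, List.ofFn_eq_map, ← Multiset.map_coe, ← Multiset.map_coe, ← huniv]
      exact hmult
    exact List.Perm.eq_of_sortedLE hm1.sortedLE_ofFn hmono2.sortedLE_ofFn hperm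
  have hpt : ∀ j, μ1 j = -μ2 (Fin.rev j) - U := by
    intro j
    exact congrFun (List.ofFn_injective hL) j
  -- ℕ-indexed version of μ2
  set ν : ℕ → ℝ := fun k => if h : k < Λ.card then μ2 ⟨k, h⟩ else 0 with hν
  have hνval : ∀ j : Fin Λ.card, μ2 j = ν (j : ℕ) := by
    intro j
    rw [hν]
    simp only
    rw [dif_pos j.isLt]
  have hLHS : ∑ j : Fin (Λ.card - Ne), μ1 (Fin.castLE (Nat.sub_le _ _) j)
      = ∑ k ∈ Finset.range (Λ.card - Ne), (-(ν (Λ.card - 1 - k)) - U) := by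
    rw [← Fin.sum_univ_eq_sum_range (fun k => -(ν (Λ.card - 1 - k)) - U) (Λ.card - Ne)]
    apply Finset.sum_congr rfl
    intro j _
    rw [hpt, hνval]
    have harg : (((Fin.castLE (Nat.sub_le Λ.card Ne) j).rev : Fin Λ.card) : ℕ)
        = Λ.card - 1 - (j : ℕ) := by
      rw [Fin.val_rev]
      simp only [Fin.coe_castLE]
      omega
    rw [harg]
  have hreflect : ∑ k ∈ Finset.range (Λ.card - Ne), ν (Λ.card - 1 - k)
      = ∑ k ∈ Finset.range (Λ.card - Ne), ν (k + Ne) := by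
    have hr := Finset.sum_range_reflect (fun k => ν (k + Ne)) (Λ.card - Ne)
    rw [← hr]
    apply Finset.sum_congr rfl
    intro k hk
    rw [Finset.mem_range] at hk
    congr 1
    omega
  have hIco : ∑ k ∈ Finset.range (Λ.card - Ne), ν (k + Ne)
      = ∑ k ∈ Finset.Ico Ne Λ.card, ν k := by
    rw [Finset.sum_Ico_eq_sum_range]
    apply Finset.sum_congr rfl
    intro k _
    congr 1
    omega
  have hsplit : ∑ k ∈ Finset.range Ne, ν k + ∑ k ∈ Finset.Ico Ne Λ.card, ν k
      = ∑ k ∈ Finset.range Λ.card, ν k := by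
    rw [Finset.range_eq_Ico, Finset.range_eq_Ico]
    exact Finset.sum_Ico_consecutive _ (Nat.zero_le _) hNe
  have hfirst : ∑ k ∈ Finset.range Ne, ν k = ∑ j : Fin Ne, μ2 (Fin.castLE hNe j) := by
    rw [← Fin.sum_univ_eq_sum_range (fun k => ν k) Ne]
    apply Finset.sum_congr rfl
    intro j _
    rw [hνval (Fin.castLE hNe j)]
    rfl
  have htot : ∑ k ∈ Finset.range Λ.card, ν k = ∑ j : Fin Λ.card, μ2 j := by
    rw [← Fin.sum_univ_eq_sum_range (fun k => ν k) Λ.card]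
    apply Finset.sum_congr rfl
    intro j _
    rw [hνval j]
  -- the trace identity
  have htrace : ∑ j : Fin Λ.card, μ2 j = -U * (∑ x ∈ Λ, (ω x : ℝ)) := by
    have h1 : ∑ j : Fin Λ.card, μ2 j = ∑ i : ↥Λ, hH2.eigenvalues i := by
      rw [Finset.sum_congr rfl (fun j _ => he2 j)]
      exact Equiv.sum_comp e2 hH2.eigenvalues
    rw [h1, ← herm_trace hH2]
    rw [Matrix.trace]
    have h2 : ∀ x : ↥Λ, (fkh d U Λ ω).diag x = -U * (ω (x : Fin d → ℤ) : ℝ) := by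
      intro x
      show fkh d U Λ ω x x = _
      unfold fkh hop
      simp only [Matrix.of_apply, sub_self]
      rw [if_neg (by simp : ¬ (∑ _i : Fin d, (0:ℤ) ^ 2) = 1)]
      simp
    rw [Finset.sum_congr rfl (fun x _ => h2 x)]
    rw [← Finset.mul_sum, Finset.univ_eq_attach, Finset.sum_attach Λ (fun x => (ω x : ℝ))]
  -- put everything together
  rw [hLHS, Finset.sum_sub_distrib]
  rw [Finset.sum_const, Finset.card_range, nsmul_eq_mul]
  rw [Finset.sum_neg_distrib, hreflect, hIco]
  have hIcoval : ∑ k ∈ Finset.Ico Ne Λ.card, ν k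
      = -U * (∑ x ∈ Λ, (ω x : ℝ)) - ∑ j : Fin Ne, μ2 (Fin.castLE hNe j) := by
    have := hsplit
    rw [htot, htrace] at this
    rw [← hfirst]
    linarith
  rw [hIcoval]
  have hcast1 : ((Λ.card - Ne : ℕ) : ℝ) = (Λ.card : ℝ) - Ne := by
    rw [Nat.cast_sub hNe]
  have hcast2 : ((∑ x ∈ Λ, ω x : ℕ) : ℝ) = ∑ x ∈ Λ, (ω x : ℝ) := by
    push_cast
    rfl
  rw [hcast1, hcast2]
  ring
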